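/- Let (X_n) be a stationary sequence whose one-step dynamics is X_1 = ∑_{i=1}^{X_0} A_i + B_1 with iid mean-one A_i independent of X_0. If P(X_0 > x) is regularly varying with index -γ, γ ∈ (0,1), then the conditional law of X_1/X_0 given X_0 > x converges to the point mass at 1 as x → ∞. -/

import Mathlib

open Filter MeasureTheory ProbabilityTheory Set

/-- if `X_1 = ∑_{i=1}^{X_0} A_i + B_1` with `A_i` iid mean-one,
independent of `X_0`, and `P(X_0 > x)` is regularly varying of index `-γ`,
`γ ∈ (0,1)`, then the conditional law of `X_1/X_0` given `X_0 > x` converges to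
the point mass at `1` as `x → ∞`. -/
theorem ratio_to_one
    (γ : ℝ) (hγ : γ ∈ Set.Ioo (0 : ℝ) 1)
    (Ω : Type*) [MeasurableSpace Ω] (P : MeasureTheory.Measure Ω)
    [IsProbabilityMeasure P]
    (X₀ : Ω → ℕ) (hX₀ : Measurable X₀)
    (A : ℕ → Ω → ℕ) (hAmeas : ∀ i, Measurable (A i))
    (B₁ : Ω → ℕ) (hB₁ : Measurable B₁)
    (hAiid : ProbabilityTheory.iIndepFun A P)
    (hAident : ∀ i, ProbabilityTheory.IdentDistrib (A i) (A 0) P P)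
    (hAmean : ∫ ω, (A 0 ω : ℝ) ∂P = 1)
    (hindep : ProbabilityTheory.IndepFun X₀
      (fun ω => ((fun i => A i ω : ℕ → ℕ), B₁ ω)) P)
    (X₁ : Ω → ℕ)
    (hrec : ∀ ω, X₁ ω = (∑ i ∈ Finset.range (X₀ ω), A i ω) + B₁ ω)
    (hRV : ∀ c : ℝ, 0 < c →
      Tendsto (fun x : ℝ =>
          (P {ω | (X₀ ω : ℝ) > c * x}).toReal / (P {ω | (X₀ ω : ℝ) > x}).toReal)
        atTop (nhds (c ^ (-γ)))) :
    ∀ ε : ℝ, 0 < ε →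
      Tendsto
        (fun x : ℝ =>
          (P {ω | (X₀ ω : ℝ) > x ∧ |(X₁ ω : ℝ) / (X₀ ω : ℝ) - 1| > ε}).toReal /
            (P {ω | (X₀ ω : ℝ) > x}).toReal)
        atTop (nhds 0) := by
  intro ε hε
  -- real-valued versions of A
  set A' : ℕ → Ω → ℝ := fun i ω => (A i ω : ℝ) with hA'def
  have hcast : Measurable (fun n : ℕ => (n : ℝ)) := measurable_from_top
  have hA'meas : ∀ i, Measurable (A' i) := fun i => hcast.comp (hAmeas i)
  have hint : Integrable (A' 0) P := by
    by_contra h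
    rw [integral_undef h] at hAmean
    norm_num at hAmean
  have hpind : Pairwise (Function.onFun (IndepFun · · P) A') := by
    intro i j hij
    exact (hAiid.indepFun hij).comp hcast hcast
  have hpid : ∀ i, IdentDistrib (A' i) (A' 0) P P :=
    fun i => (hAident i).comp hcast
  have hSLLN := strong_law_ae (μ := P) A' hint hpind hpid
  rw [hAmean] at hSLLN
  -- the normalized sums
  set f : ℕ → Ω → ℝ :=
    fun n ω => (((∑ i ∈ Finset.range n, A i ω) + B₁ ω : ℕ) : ℝ) / n with hfdef
  have hfmeas : ∀ n, Measurable (f n) := by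
    intro n
    apply Measurable.div_const
    exact hcast.comp ((Finset.measurable_sum _ (fun i _ => hAmeas i)).add hB₁)
  have hfae : ∀ᵐ ω ∂P, Tendsto (fun n => f n ω) atTop (nhds 1) := by
    filter_upwards [hSLLN] with ω hω
    have h1 : Tendsto (fun n : ℕ => (B₁ ω : ℝ) / n) atTop (nhds 0) :=
      tendsto_const_div_atTop_nhds_zero_nat _
    have h2 := hω.add h1
    rw [add_zero] at h2
    convert h2 using 2 with n
    simp only [hfdef]
    push_cast
    rw [add_div, smul_eq_mul, ← div_eq_inv_mul]
  -- convergence in measure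
  have htm : TendstoInMeasure P f atTop (fun _ => (1 : ℝ)) :=
    tendstoInMeasure_of_tendsto_ae (fun n => (hfmeas n).aestronglyMeasurable)
      hfae
  have hq := htm (ENNReal.ofReal ε) (ENNReal.ofReal_pos.mpr hε)
  -- the pair map and bad sets
  set pair : Ω → (ℕ → ℕ) × ℕ := fun ω => ((fun i => A i ω), B₁ ω) with hpair
  have hTmeas : ∀ n : ℕ, MeasurableSet {p : (ℕ → ℕ) × ℕ |
      ε < |(((∑ i ∈ Finset.range n, p.1 i) + p.2 : ℕ) : ℝ) / n - 1|} := by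
    intro n
    have hg : Measurable (fun p : (ℕ → ℕ) × ℕ =>
        |(((∑ i ∈ Finset.range n, p.1 i) + p.2 : ℕ) : ℝ) / n - 1|) := by
      apply Measurable.abs
      apply Measurable.sub_const
      apply Measurable.div_const
      exact hcast.comp ((Finset.measurable_sum _
        (fun i _ => (measurable_pi_apply i).comp measurable_fst)).add measurable_snd)
    exact hg measurableSet_Ioi
  -- main: for every δ > 0, eventually ratio ≤ δ/2 < δ
  rw [NormedAddCommGroup.tendsto_nhds_zero]
  intro δ hδ
  have hδ2 : (0:ℝ) < δ / 2 := by linarith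
  have hδ2' : (0 : ENNReal) < ENNReal.ofReal (δ / 2) := by
    simp [ENNReal.ofReal_pos, hδ2]
  obtain ⟨N, hN⟩ := (ENNReal.tendsto_atTop_zero.mp hq) (ENNReal.ofReal (δ/2)) hδ2'
  filter_upwards [eventually_ge_atTop (max (N : ℝ) 0)] with x hx
  have hx0 : (0:ℝ) ≤ x := le_trans (le_max_right _ _) hx
  have hxN : (N : ℝ) ≤ x := le_trans (le_max_left _ _) hx
  -- the disjoint decomposition
  set s : ℕ → Set Ω := fun n => X₀ ⁻¹' {n} ∩ {ω : Ω | (n : ℝ) > x} with hsdef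
  have hsmeas : ∀ n, MeasurableSet (s n) := by
    intro n
    by_cases h : (n : ℝ) > x
    · have : s n = X₀ ⁻¹' {n} := by
        simp [hsdef, h, Set.inter_univ, Set.setOf_true]
      rw [this]; exact hX₀ (measurableSet_singleton n)
    · have : s n = ∅ := by
        simp [hsdef, h]
      rw [this]; exact MeasurableSet.empty
  set Bad : ℕ → Set Ω := fun n => pair ⁻¹' {p : (ℕ → ℕ) × ℕ |
      ε < |(((∑ i ∈ Finset.range n, p.1 i) + p.2 : ℕ) : ℝ) / n - 1|} with hBdef
  have hBadmeas : ∀ n, MeasurableSet (Bad n) := by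
    intro n
    have hpm : Measurable pair := by
      apply Measurable.prod
      · exact measurable_pi_lambda _ (fun i => hAmeas i)
      · exact hB₁
    exact hpm (hTmeas n)
  have hdenom : {ω : Ω | (X₀ ω : ℝ) > x} = ⋃ n, s n := by
    ext ω
    simp only [hsdef, Set.mem_setOf_eq, Set.mem_iUnion, Set.mem_inter_iff,
      Set.mem_preimage, Set.mem_singleton_iff]
    constructor
    · intro h; exact ⟨X₀ ω, rfl, h⟩
    · rintro ⟨n, rfl, h⟩; exact h
  have hnum : {ω : Ω | (X₀ ω : ℝ) > x ∧ |(X₁ ω : ℝ) / (X₀ ω : ℝ) - 1| > ε}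
      = ⋃ n, (s n ∩ Bad n) := by
    ext ω
    simp only [hsdef, hBdef, hpair, Set.mem_setOf_eq, Set.mem_iUnion, Set.mem_inter_iff,
      Set.mem_preimage, Set.mem_singleton_iff, gt_iff_lt]
    constructor
    · rintro ⟨h1, h2⟩
      refine ⟨X₀ ω, ⟨rfl, h1⟩, ?_⟩
      rw [hrec ω] at h2
      exact h2
    · rintro ⟨n, ⟨rfl, h1⟩, h2⟩
      refine ⟨h1, ?_⟩
      rw [hrec ω]
      exact h2
  have hdisj : Pairwise (Function.onFun Disjoint s) := by
    intro i j hij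
    refine Set.disjoint_left.mpr ?_
    rintro ω ⟨hi, -⟩ ⟨hj, -⟩
    exact hij (hi.symm.trans hj)
  have hdisj2 : Pairwise (Function.onFun Disjoint (fun n => s n ∩ Bad n)) :=
    fun i j hij => (hdisj hij).mono Set.inter_subset_left Set.inter_subset_left
  have hPdenom : P {ω : Ω | (X₀ ω : ℝ) > x} = ∑' n, P (s n) := by
    rw [hdenom, measure_iUnion hdisj hsmeas]
  have hPnum : P {ω : Ω | (X₀ ω : ℝ) > x ∧ |(X₁ ω : ℝ) / (X₀ ω : ℝ) - 1| > ε}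
      = ∑' n, P (s n ∩ Bad n) := by
    rw [hnum, measure_iUnion hdisj2 (fun n => (hsmeas n).inter (hBadmeas n))]
  -- bound each term
  have hterm : ∀ n, P (s n ∩ Bad n) ≤ ENNReal.ofReal (δ/2) * P (s n) := by
    intro n
    by_cases h : (n : ℝ) > x
    · have hsn : s n = X₀ ⁻¹' {n} := by
        simp [hsdef, h, Set.inter_univ, Set.setOf_true]
      have hfact : P (s n ∩ Bad n) = P (s n) * P (Bad n) := by
        rw [hsn]
        exact hindep.measure_inter_preimage_eq_mul {n} _
          (measurableSet_singleton n) (hTmeas n)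
      have hnN : N ≤ n := by
        have : (N : ℝ) < (n : ℝ) := lt_of_le_of_lt hxN h
        exact_mod_cast this.le
      have hBsub : Bad n ⊆ {ω : Ω | ε ≤ dist (f n ω) 1} := by
        intro ω hω
        simp only [hBdef, hpair, Set.mem_preimage, Set.mem_setOf_eq] at hω
        simp only [Set.mem_setOf_eq, Real.dist_eq, hfdef]
        exact hω.le
      have hBle : P (Bad n) ≤ ENNReal.ofReal (δ/2) :=
        le_trans (measure_mono (hBsub.trans (fun ω hω => by
          simp only [Set.mem_setOf_eq, edist_dist] at hω ⊢
          exact ENNReal.ofReal_le_ofReal hω))) (hN n hnN)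
      calc P (s n ∩ Bad n) = P (s n) * P (Bad n) := hfact
        _ ≤ P (s n) * ENNReal.ofReal (δ/2) := mul_le_mul_right hBle _
        _ = ENNReal.ofReal (δ/2) * P (s n) := mul_comm _ _
    · have : s n = ∅ := by simp [hsdef, h]
      simp [this]
  have hmain : P {ω : Ω | (X₀ ω : ℝ) > x ∧ |(X₁ ω : ℝ) / (X₀ ω : ℝ) - 1| > ε}
      ≤ ENNReal.ofReal (δ/2) * P {ω : Ω | (X₀ ω : ℝ) > x} := by
    rw [hPnum, hPdenom, ← ENNReal.tsum_mul_left]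
    exact ENNReal.tsum_le_tsum hterm
  -- pass to reals
  set num := P {ω : Ω | (X₀ ω : ℝ) > x ∧ |(X₁ ω : ℝ) / (X₀ ω : ℝ) - 1| > ε} with hnumdef
  set den := P {ω : Ω | (X₀ ω : ℝ) > x} with hdendef
  have hdenne : den ≠ ⊤ := measure_ne_top P _
  have hnumne : num ≠ ⊤ := measure_ne_top P _
  have hmainR : num.toReal ≤ (δ/2) * den.toReal := by
    have := ENNReal.toReal_mono (by
      exact ENNReal.mul_ne_top ENNReal.ofReal_ne_top hdenne) hmain
    rwa [ENNReal.toReal_mul, ENNReal.toReal_ofReal hδ2.le] at this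
  have hratio : num.toReal / den.toReal ≤ δ / 2 := by
    rcases eq_or_lt_of_le (ENNReal.toReal_nonneg : (0:ℝ) ≤ den.toReal) with h | h
    · rw [← h, div_zero]; exact hδ2.le
    · rw [div_le_iff₀ h]; exact hmainR
  have hnn : (0:ℝ) ≤ num.toReal / den.toReal :=
    div_nonneg ENNReal.toReal_nonneg ENNReal.toReal_nonneg
  rw [Real.norm_eq_abs, abs_of_nonneg hnn]
  linarith
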